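/- Let v_1,...,v_k : [0,∞) → R^N solve the ODE system dv_i/dt = γ (I - v_i v_iᵀ - 2Σ_{j=1}^{i-1} v_j v_jᵀ) J(t) v_i for i = 1,...,k, where J(t) is a continuous family of symmetric N×N matrices and γ > 0. If v_i(0)ᵀ v_j(0) = δ_{ij} for all 1 ≤ i, j ≤ k, then v_i(t)ᵀ v_j(t) = δ_{ij} for all t ≥ 0. -/

import Mathlib

open scoped RealInnerProductSpace
open Finset

private lemma sum_filter_delta {k : ℕ} (i j : Fin k) (f : Fin k → ℝ) :
    ∑ l ∈ Finset.univ.filter (fun l : Fin k => l < j), f l * (if i = l then (1:ℝ) else 0)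
      = if i < j then f i else 0 := by
  classical
  simp only [mul_ite, mul_one, mul_zero]
  rw [Finset.sum_ite_eq]
  simp [Finset.mem_filter]

theorem stmt12 (N k : ℕ) (γ : ℝ) (hγ : 0 < γ)
    (J : ℝ → (EuclideanSpace ℝ (Fin N) →L[ℝ] EuclideanSpace ℝ (Fin N)))
    (hJcont : Continuous J) (hJsym : ∀ t, IsSelfAdjoint (J t))
    (v : Fin k → ℝ → EuclideanSpace ℝ (Fin N))
    (hode : ∀ (i : Fin k), ∀ t ∈ Set.Ici (0:ℝ),
      HasDerivAt (v i)
        (γ • (J t (v i t) - ⟪v i t, J t (v i t)⟫ • v i t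
          - (2:ℝ) • ∑ j ∈ Finset.univ.filter (fun j : Fin k => j < i),
              ⟪v j t, J t (v i t)⟫ • v j t)) t)
    (hinit : ∀ i j : Fin k, ⟪v i 0, v j 0⟫ = if i = j then (1:ℝ) else 0) :
    ∀ t ≥ (0:ℝ), ∀ i j : Fin k,
      ⟪v i t, v j t⟫ = if i = j then (1:ℝ) else 0 := by
  classical
  -- abbreviations
  set c : ℝ → Fin k → Fin k → ℝ := fun t l m => ⟪v l t, J t (v m t)⟫ with hc
  set w : Fin k → ℝ → EuclideanSpace ℝ (Fin N) := fun i t =>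
    γ • (J t (v i t) - ⟪v i t, J t (v i t)⟫ • v i t
      - (2:ℝ) • ∑ l ∈ Finset.univ.filter (fun l : Fin k => l < i),
          ⟪v l t, J t (v i t)⟫ • v l t) with hwdef
  set h : ℝ → (Fin k × Fin k) → ℝ := fun t p =>
    ⟪v p.1 t, v p.2 t⟫ - (if p.1 = p.2 then (1:ℝ) else 0) with hhdef
  set D : ℝ → (Fin k × Fin k) → ℝ := fun t p =>
    ⟪v p.1 t, w p.2 t⟫ + ⟪w p.1 t, v p.2 t⟫ with hDdef
  -- symmetry of c
  have hcsymm : ∀ t (l m : Fin k), c t l m = c t m l := by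
    intro t l m
    have h1 : ⟪(J t) (v l t), v m t⟫ = ⟪v l t, (J t) (v m t)⟫ :=
      (hJsym t).isSymmetric (v l t) (v m t)
    show ⟪v l t, (J t) (v m t)⟫ = ⟪v m t, (J t) (v l t)⟫
    rw [← h1, real_inner_comm]
  -- derivative of h
  have hDeriv : ∀ t ∈ Set.Ici (0:ℝ), HasDerivAt h (D t) t := by
    intro t ht
    rw [hasDerivAt_pi]
    intro p
    have h1 := hode p.1 t ht
    have h2 := hode p.2 t ht
    exact ((h1.inner ℝ h2).sub_const _)
  -- continuity of v
  have hvcont : ∀ i, ContinuousOn (v i) (Set.Ici (0:ℝ)) := fun i t ht =>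
    (hode i t ht).continuousAt.continuousWithinAt
  -- the key algebraic identity
  have hident : ∀ t (p : Fin k × Fin k), D t p =
      γ * ( -(c t p.1 p.1 + c t p.2 p.2) * h t p
        - 2 * ∑ l ∈ Finset.univ.filter (fun l : Fin k => l < p.1),
            c t l p.1 * h t (l, p.2)
        - 2 * ∑ l ∈ Finset.univ.filter (fun l : Fin k => l < p.2),
            c t l p.2 * h t (p.1, l)) := by
    intro t p
    obtain ⟨i, j⟩ := p
    have hJsy : ∀ a b : Fin k, ⟪(J t) (v a t), v b t⟫ = c t a b := fun a b =>
      (hJsym t).isSymmetric (v a t) (v b t)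
    have expand_r : ∀ (x : EuclideanSpace ℝ (Fin N)) (m : Fin k),
        ⟪x, w m t⟫ = γ * (⟪x, (J t) (v m t)⟫ - c t m m * ⟪x, v m t⟫
          - 2 * ∑ l ∈ Finset.univ.filter (fun l : Fin k => l < m),
              c t l m * ⟪x, v l t⟫) := by
      intro x m
      rw [hwdef]
      simp only [real_inner_smul_right, inner_sub_right, inner_sum]
      rfl
    have expand_l : ∀ (y : EuclideanSpace ℝ (Fin N)) (m : Fin k),
        ⟪w m t, y⟫ = γ * (⟪(J t) (v m t), y⟫ - c t m m * ⟪v m t, y⟫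
          - 2 * ∑ l ∈ Finset.univ.filter (fun l : Fin k => l < m),
              c t l m * ⟪v l t, y⟫) := by
      intro y m
      rw [hwdef]
      simp only [real_inner_smul_left, inner_sub_left, sum_inner]
      rfl
    have hL : D t (i, j) =
        γ * (c t i j - c t j j * ⟪v i t, v j t⟫
          - 2 * ∑ l ∈ Finset.univ.filter (fun l : Fin k => l < j),
              c t l j * ⟪v i t, v l t⟫)
        + γ * (c t i j - c t i i * ⟪v i t, v j t⟫
          - 2 * ∑ l ∈ Finset.univ.filter (fun l : Fin k => l < i),
              c t l i * ⟪v l t, v j t⟫) := by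
      show ⟪v i t, w j t⟫ + ⟪w i t, v j t⟫ = _
      rw [expand_r (v i t) j, expand_l (v j t) i, hJsy i j]
    rw [hL, hhdef]
    dsimp only
    simp only [mul_sub, Finset.sum_sub_distrib]
    rw [sum_filter_delta i j (fun l => c t l j)]
    have hdel : ∑ l ∈ Finset.univ.filter (fun l : Fin k => l < i),
        (c t l i * if l = j then (1:ℝ) else 0)
        = if j < i then c t j i else 0 := by
      have e := sum_filter_delta j i (fun l => c t l i)
      rw [← e]
      congr 1; funext l; congr 1; simp [eq_comm]
    rw [hdel]
    rcases lt_trichotomy i j with hij | hij | hij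
    · have h1 : ¬ j < i := not_lt.2 hij.le
      have h2 : ¬ i = j := hij.ne
      simp only [if_pos hij, if_neg h1, if_neg h2]
      ring
    · subst hij
      simp only [lt_irrefl, if_false, if_true, if_pos rfl]
      ring
    · have h1 : ¬ i < j := not_lt.2 hij.le
      have h2 : ¬ i = j := hij.ne'
      simp only [if_pos hij, if_neg h1, if_neg h2]
      rw [hcsymm t j i]
      ring
  -- main argument: fix T ≥ 0, show h T = 0
  intro T hT
  suffices hfin : h T = 0 by
    intro i j
    have := congrFun hfin (i, j)
    rw [hhdef] at this
    dsimp only at this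
    simpa [sub_eq_zero] using this
  -- continuity of c as a pi-valued function
  have hccont : ContinuousOn (fun t => (fun p : Fin k × Fin k => c t p.1 p.2))
      (Set.Icc (0:ℝ) T) := by
    rw [continuousOn_pi]
    intro p
    have : ContinuousOn (fun t => J t (v p.2 t)) (Set.Icc (0:ℝ) T) :=
      (hJcont.continuousOn).clm_apply ((hvcont p.2).mono Set.Icc_subset_Ici_self)
    exact ((hvcont p.1).mono Set.Icc_subset_Ici_self).inner this
  obtain ⟨C, hC⟩ := (isCompact_Icc).exists_bound_of_continuousOn hccont
  have hC0 : 0 ≤ C := le_trans (norm_nonneg _) (hC 0 ⟨le_refl _, hT⟩)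
  have hcb : ∀ t ∈ Set.Icc (0:ℝ) T, ∀ l m : Fin k, |c t l m| ≤ C := by
    intro t ht l m
    calc |c t l m| ≤ ‖(fun p : Fin k × Fin k => c t p.1 p.2)‖ := by
          simpa using norm_le_pi_norm (fun p : Fin k × Fin k => c t p.1 p.2) (l, m)
      _ ≤ C := hC t ht
  set K : ℝ := γ * ((2 + 4 * k) * C) with hK
  have hK0 : 0 ≤ K := by positivity
  -- h is continuous on Icc 0 T
  have hhcont : ContinuousOn h (Set.Icc (0:ℝ) T) := fun t ht =>
    (hDeriv t ht.1).continuousAt.continuousWithinAt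
  -- the Gronwall bound
  have hbound : ∀ t ∈ Set.Ico (0:ℝ) T, ‖D t‖ ≤ K * ‖h t‖ + 0 := by
    intro t ht
    rw [add_zero]
    have hKh : 0 ≤ K * ‖h t‖ := mul_nonneg hK0 (norm_nonneg _)
    rw [pi_norm_le_iff_of_nonneg hKh]
    intro p
    obtain ⟨i, j⟩ := p
    have htIcc : t ∈ Set.Icc (0:ℝ) T := ⟨ht.1, ht.2.le⟩
    have hH : ∀ q : Fin k × Fin k, |h t q| ≤ ‖h t‖ := fun q => norm_le_pi_norm (h t) q
    rw [hident t (i, j)]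
    have e1 : |(-(c t i i + c t j j) * h t (i, j)
        - 2 * ∑ l ∈ Finset.univ.filter (fun l : Fin k => l < i), c t l i * h t (l, j)
        - 2 * ∑ l ∈ Finset.univ.filter (fun l : Fin k => l < j), c t l j * h t (i, l))|
        ≤ (2 + 4 * k) * C * ‖h t‖ := by
      have habs : ∀ (m : Fin k) (s : Finset (Fin k)) (f : Fin k → Fin k × Fin k),
          |∑ l ∈ s, c t l m * h t (f l)| ≤ s.card * (C * ‖h t‖) := by
        intro m s f
        calc |∑ l ∈ s, c t l m * h t (f l)| ≤ ∑ l ∈ s, |c t l m * h t (f l)| :=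
              Finset.abs_sum_le_sum_abs _ _
          _ ≤ ∑ l ∈ s, C * ‖h t‖ := by
              refine Finset.sum_le_sum fun l _ => ?_
              rw [abs_mul]
              exact mul_le_mul (hcb t htIcc l m) (hH (f l)) (abs_nonneg _)
                hC0
          _ = s.card * (C * ‖h t‖) := by rw [Finset.sum_const, nsmul_eq_mul]
      have hcard : ∀ i₀ : Fin k,
          ((Finset.univ.filter (fun l : Fin k => l < i₀)).card : ℝ) ≤ k := by
        intro i₀
        have := Finset.card_filter_le (Finset.univ : Finset (Fin k))
          (fun l : Fin k => l < i₀)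
        calc ((Finset.univ.filter (fun l : Fin k => l < i₀)).card : ℝ)
            ≤ (Finset.univ : Finset (Fin k)).card := by exact_mod_cast this
          _ = k := by simp
      have hCH : 0 ≤ C * ‖h t‖ := mul_nonneg hC0 (norm_nonneg _)
      calc |(-(c t i i + c t j j) * h t (i, j)
            - 2 * ∑ l ∈ Finset.univ.filter (fun l : Fin k => l < i), c t l i * h t (l, j)
            - 2 * ∑ l ∈ Finset.univ.filter (fun l : Fin k => l < j), c t l j * h t (i, l))|
          ≤ |(-(c t i i + c t j j)) * h t (i, j)|
            + 2 * |∑ l ∈ Finset.univ.filter (fun l : Fin k => l < i), c t l i * h t (l, j)|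
            + 2 * |∑ l ∈ Finset.univ.filter (fun l : Fin k => l < j), c t l j * h t (i, l)| := by
            calc _ ≤ |(-(c t i i + c t j j)) * h t (i, j)
                  - 2 * ∑ l ∈ Finset.univ.filter (fun l : Fin k => l < i), c t l i * h t (l, j)|
                  + |2 * ∑ l ∈ Finset.univ.filter (fun l : Fin k => l < j), c t l j * h t (i, l)| :=
                  abs_sub _ _
              _ ≤ _ := by
                  rw [abs_mul (2:ℝ), abs_two]
                  gcongr
                  calc _ ≤ |(-(c t i i + c t j j)) * h t (i, j)|
                        + |2 * ∑ l ∈ Finset.univ.filter (fun l : Fin k => l < i),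
                            c t l i * h t (l, j)| := abs_sub _ _
                    _ = _ := by rw [abs_mul (2:ℝ), abs_two]
          _ ≤ (C + C) * ‖h t‖ + 2 * (k * (C * ‖h t‖)) + 2 * (k * (C * ‖h t‖)) := by
              gcongr
              · rw [abs_mul, abs_neg]
                refine mul_le_mul ?_ (hH (i, j)) (abs_nonneg _) (by positivity)
                calc |c t i i + c t j j| ≤ |c t i i| + |c t j j| := abs_add_le _ _
                  _ ≤ C + C := add_le_add (hcb t htIcc i i) (hcb t htIcc j j)
              · exact le_trans (habs i _ (fun l => (l, j)))
                  (mul_le_mul_of_nonneg_right (hcard i) hCH)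
              · exact le_trans (habs j _ (fun l => (i, l)))
                  (mul_le_mul_of_nonneg_right (hcard j) hCH)
          _ = (2 + 4 * k) * C * ‖h t‖ := by ring
    calc ‖γ * (-(c t i i + c t j j) * h t (i, j)
          - 2 * ∑ l ∈ Finset.univ.filter (fun l : Fin k => l < i), c t l i * h t (l, j)
          - 2 * ∑ l ∈ Finset.univ.filter (fun l : Fin k => l < j), c t l j * h t (i, l))‖
        = γ * |(-(c t i i + c t j j) * h t (i, j)
          - 2 * ∑ l ∈ Finset.univ.filter (fun l : Fin k => l < i), c t l i * h t (l, j)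
          - 2 * ∑ l ∈ Finset.univ.filter (fun l : Fin k => l < j), c t l j * h t (i, l))| := by
          rw [Real.norm_eq_abs, abs_mul, abs_of_pos hγ]
      _ ≤ γ * ((2 + 4 * k) * C * ‖h t‖) := mul_le_mul_of_nonneg_left e1 hγ.le
      _ = K * ‖h t‖ := by rw [hK]; ring
  -- initial condition : h 0 = 0
  have hh0 : h 0 = 0 := by
    funext p
    rw [hhdef]
    dsimp only
    rw [hinit p.1 p.2, sub_self]
    rfl
  have key := norm_le_gronwallBound_of_norm_deriv_right_le hhcont
    (fun t ht => (hDeriv t ht.1).hasDerivWithinAt)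
    (by rw [hh0, norm_zero] : ‖h 0‖ ≤ 0) hbound T ⟨hT, le_refl T⟩
  rw [gronwallBound_ε0_δ0] at key
  exact norm_le_zero_iff.1 key
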